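/- Let (X,T) be a topological dynamical system. For each ε > 0 and each j ∈ ℕ, the set E^m_ε := {x ∈ X : ∃ δ > 0, ∀ y,z ∈ B_δ(x), D_({i : d(Tⁱy,Tⁱz) ≤ ε}) ≥ 1 - ε} is inversely invariant, i.e. T^{-j}(E^m_ε) ⊆ E^m_ε. -/

import Mathlib

open Filter Metric Set
open scoped Classical

noncomputable def lowerDensity (S : Set ℕ) : ℝ :=
  Filter.atTop.liminf (fun n => (((Finset.range (n + 1)).filter (fun i => i ∈ S)).card : ℝ) / (n + 1))

noncomputable def upperDensity (S : Set ℕ) : ℝ :=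
  Filter.atTop.limsup (fun n => (((Finset.range (n + 1)).filter (fun i => i ∈ S)).card : ℝ) / (n + 1))

lemma aux_card_le (S : Set ℕ) (j n : ℕ) :
    ((Finset.range (n + 1)).filter (fun i => i + j ∈ S)).card ≤
      ((Finset.range (n + j + 1)).filter (fun i => i ∈ S)).card := by
  apply Finset.card_le_card_of_injOn (fun i => i + j)
  · intro i hi
    simp only [Finset.mem_coe, Finset.mem_filter, Finset.mem_range] at hi ⊢
    exact ⟨by omega, hi.2⟩
  · intro a _ b _ h
    simpa using h

lemma lowerDensity_shift_le (S : Set ℕ) (j : ℕ) :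
    lowerDensity {i | i + j ∈ S} ≤ lowerDensity S := by
  set a : ℕ → ℝ := fun n => (((Finset.range (n + 1)).filter (fun i => i ∈ S)).card : ℝ) / (n + 1)
    with ha
  set b : ℕ → ℝ := fun n =>
    (((Finset.range (n + 1)).filter (fun i => i ∈ ({i | i + j ∈ S} : Set ℕ))).card : ℝ) / (n + 1)
    with hb
  have hn1 : ∀ n : ℕ, (0:ℝ) < (n:ℝ) + 1 := fun n => by positivity
  have ha0 : ∀ n, 0 ≤ a n := fun n => by positivity
  have ha1 : ∀ n, a n ≤ 1 := by
    intro n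
    rw [ha, div_le_one (hn1 n)]
    have := Finset.card_filter_le (Finset.range (n + 1)) (fun i => i ∈ S)
    rw [Finset.card_range] at this
    exact_mod_cast this
  have hb0 : ∀ n, 0 ≤ b n := fun n => by positivity
  have hb1 : ∀ n, b n ≤ 1 := by
    intro n
    rw [hb, div_le_one (hn1 n)]
    have := Finset.card_filter_le (Finset.range (n + 1))
      (fun i => i ∈ ({i | i + j ∈ S} : Set ℕ))
    rw [Finset.card_range] at this
    exact_mod_cast this
  rw [lowerDensity, lowerDensity, ← ha, ← hb]
  refine le_of_forall_pos_le_add ?_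
  intro η hη
  have key : ∀ᶠ n in atTop, b n ≤ a (n + j) + η := by
    have htend : Tendsto (fun n : ℕ => (j : ℝ) / ((n : ℝ) + 1)) atTop (nhds 0) := by
      apply Tendsto.div_atTop tendsto_const_nhds
      exact tendsto_atTop_add_const_right _ _ tendsto_natCast_atTop_atTop
    filter_upwards [htend.eventually_le_const hη] with n hn
    have hc := aux_card_le S j n
    set c : ℕ := ((Finset.range (n + j + 1)).filter (fun i => i ∈ S)).card with hcdef
    have hcle : (c : ℝ) ≤ (n : ℝ) + j + 1 := by
      have := Finset.card_filter_le (Finset.range (n + j + 1)) (fun i => i ∈ S)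
      rw [Finset.card_range] at this
      push_cast
      exact_mod_cast this
    have h1 : b n ≤ (c : ℝ) / ((n : ℝ) + 1) := by
      rw [hb]
      have hcast : (((Finset.range (n + 1)).filter
          (fun i => i ∈ ({i | i + j ∈ S} : Set ℕ))).card : ℝ) ≤ (c : ℝ) := by
        exact_mod_cast hc
      exact div_le_div_of_nonneg_right hcast (hn1 n).le
    have h2 : (c : ℝ) / ((n : ℝ) + 1) ≤ a (n + j) + (j : ℝ) / ((n : ℝ) + 1) := by
      have ha' : a (n + j) = (c : ℝ) / ((n : ℝ) + j + 1) := by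
        rw [hcdef, ha]; push_cast; ring
      rw [ha']
      rw [div_add_div _ _ (ne_of_gt (by positivity : (0:ℝ) < (n:ℝ)+j+1)) (ne_of_gt (hn1 n))]
      rw [div_le_div_iff₀ (hn1 n) (by positivity)]
      have hint : (c:ℝ) * (((n:ℝ)+1) * (j:ℝ)) ≤ ((n:ℝ)+j+1) * (((n:ℝ)+1) * (j:ℝ)) :=
        mul_le_mul_of_nonneg_right hcle (by positivity)
      nlinarith [hint, hn1 n]
    calc b n ≤ (c : ℝ) / ((n : ℝ) + 1) := h1
      _ ≤ a (n + j) + (j : ℝ) / ((n : ℝ) + 1) := h2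
      _ ≤ a (n + j) + η := by linarith
  have hbb : atTop.IsBoundedUnder (· ≥ ·) b :=
    Filter.isBoundedUnder_of ⟨0, hb0⟩
  have hcv : atTop.IsCoboundedUnder (· ≥ ·) (fun n => a (n + j) + η) :=
    Filter.IsBoundedUnder.isCoboundedUnder_ge
      (Filter.isBoundedUnder_of ⟨1 + η, fun n => add_le_add (ha1 (n+j)) le_rfl⟩)
  calc atTop.liminf b ≤ atTop.liminf (fun n => a (n + j) + η) :=
        Filter.liminf_le_liminf key hbb hcv
    _ = atTop.liminf (fun n => a (n + j)) + η := by
        apply liminf_add_const atTop (fun n => a (n + j)) η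
        · exact Filter.IsBoundedUnder.isCoboundedUnder_ge
            (Filter.isBoundedUnder_of ⟨1, fun n => ha1 (n+j)⟩)
        · exact Filter.isBoundedUnder_of ⟨0, fun n => ha0 (n+j)⟩
    _ = atTop.liminf a + η := by rw [Filter.liminf_nat_add a j]

theorem Em_eps_inv_invariant {X : Type*} [MetricSpace X] [CompactSpace X]
    (T : X → X) (hT : Continuous T) (ε : ℝ) (hε : 0 < ε) (j : ℕ) :
    (T^[j]) ⁻¹' {x : X | ∃ δ > 0, ∀ y ∈ Metric.closedBall x δ, ∀ z ∈ Metric.closedBall x δ,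
        1 - ε ≤ lowerDensity {i : ℕ | dist (T^[i] y) (T^[i] z) ≤ ε}} ⊆
      {x : X | ∃ δ > 0, ∀ y ∈ Metric.closedBall x δ, ∀ z ∈ Metric.closedBall x δ,
        1 - ε ≤ lowerDensity {i : ℕ | dist (T^[i] y) (T^[i] z) ≤ ε}} := by
  intro x hx
  simp only [mem_preimage, mem_setOf_eq] at hx
  obtain ⟨δ, hδpos, hδ⟩ := hx
  have hcont : Continuous (T^[j]) := hT.iterate j
  obtain ⟨δ', hδ'pos, hδ'⟩ := Metric.continuous_iff.mp hcont x δ hδpos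
  refine ⟨δ' / 2, by positivity, ?_⟩
  intro y hy z hz
  have hyb : T^[j] y ∈ Metric.closedBall (T^[j] x) δ := by
    have : dist y x < δ' := lt_of_le_of_lt (Metric.mem_closedBall.mp hy) (by linarith)
    exact Metric.mem_closedBall.mpr (hδ' y this).le
  have hzb : T^[j] z ∈ Metric.closedBall (T^[j] x) δ := by
    have : dist z x < δ' := lt_of_le_of_lt (Metric.mem_closedBall.mp hz) (by linarith)
    exact Metric.mem_closedBall.mpr (hδ' z this).le
  have h1 := hδ _ hyb _ hzb
  have hset : {i : ℕ | dist (T^[i] (T^[j] y)) (T^[i] (T^[j] z)) ≤ ε} =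
      {i : ℕ | i + j ∈ {i : ℕ | dist (T^[i] y) (T^[i] z) ≤ ε}} := by
    ext i
    simp only [mem_setOf_eq, Function.iterate_add_apply]
  rw [hset] at h1
  exact h1.trans (lowerDensity_shift_le _ j)
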